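/- Let $\Psi=e^\psi-1$ be an Orlicz function for which there exist constants $K,p>0$ with $\Psi(x)\le Kx^p$ for all $x>K$. Then $\Psi$ satisfies the condition (HJ): there exists $K_0>0$ such that $\psi(su)\le K_0(s\ln(1+s)+s\psi(u))$ for all $s,u\ge K_0$. -/

import Mathlib

set_option maxHeartbeats 1000000


open MeasureTheory ProbabilityTheory

/-- An Orlicz function: convex, strictly increasing on `[0,∞)`, vanishing at `0`. -/
def IsOrlicz (Ψ : ℝ → ℝ) : Prop :=
  ConvexOn ℝ (Set.Ici 0) Ψ ∧ StrictMonoOn Ψ (Set.Ici 0) ∧ Ψ 0 = 0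

/-- The associated exponent `ψ` with `Ψ = e^ψ - 1`. -/
noncomputable def orliczExp (Ψ : ℝ → ℝ) (x : ℝ) : ℝ := Real.log (1 + Ψ x)

/-- The Orlicz (Luxemburg) norm of a Banach-space-valued random variable. -/
noncomputable def orliczNorm {Ω : Type*} [MeasurableSpace Ω] (μ : Measure Ω)
    (Ψ : ℝ → ℝ) {F : Type*} [NormedAddCommGroup F] (X : Ω → F) : ℝ :=
  sInf {a : ℝ | 0 < a ∧ ∫⁻ ω, ENNReal.ofReal (Ψ (‖X ω‖ / a)) ∂μ ≤ 1}

/-- `X` has finite Orlicz norm. -/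
def OrliczFinite {Ω : Type*} [MeasurableSpace Ω] (μ : Measure Ω)
    (Ψ : ℝ → ℝ) {F : Type*} [NormedAddCommGroup F] (X : Ω → F) : Prop :=
  ∃ a : ℝ, 0 < a ∧ ∫⁻ ω, ENNReal.ofReal (Ψ (‖X ω‖ / a)) ∂μ ≤ 1

/-- Condition (HJ): `ψ(su) ≤ K (s ln(1+s) + s ψ(u))` for all `s, u ≥ K`. -/
def HJCond (Ψ : ℝ → ℝ) : Prop :=
  ∃ K > (0:ℝ), ∀ s u : ℝ, K ≤ s → K ≤ u →
    orliczExp Ψ (s * u) ≤ K * (s * Real.log (1 + s) + s * orliczExp Ψ u)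

/-- A Rademacher (symmetric ±1) random variable. -/
def IsRademacher {Ω : Type*} [MeasurableSpace Ω] (μ : Measure Ω) (ε : Ω → ℝ) : Prop :=
  μ {ω | ε ω = 1} = 1/2 ∧ μ {ω | ε ω = -1} = 1/2

/-- Polynomial growth of `Ψ` implies condition (HJ). -/
theorem stmt8 {Ψ : ℝ → ℝ} (hΨ : IsOrlicz Ψ) {K p : ℝ} (hK : 0 < K) (hp : 0 < p)
    (hbound : ∀ x > K, Ψ x ≤ K * x ^ p) :
    HJCond Ψ := by
  obtain ⟨hconv, hmono, h0⟩ := hΨ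
  have hΨ0 : ∀ x, 0 ≤ x → 0 ≤ Ψ x := by
    intro x hx
    rcases eq_or_lt_of_le hx with h | h
    · simp [← h, h0]
    · have := hmono (Set.mem_Ici.2 (le_refl 0)) (Set.mem_Ici.2 (le_of_lt h)) h
      linarith [this, h0]
  set c := Ψ 1 with hc_def
  have hc : 0 < c := by
    have := hmono (Set.mem_Ici.2 (le_refl 0)) (by norm_num : (1:ℝ) ∈ Set.Ici 0) one_pos
    rw [h0] at this; exact this
  -- linear lower bound: for u ≥ 1, c * u ≤ Ψ u
  have hlin : ∀ u : ℝ, 1 ≤ u → c * u ≤ Ψ u := by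
    intro u hu
    have hu0 : (0:ℝ) < u := by linarith
    have key := hconv.2 (Set.self_mem_Ici) (Set.mem_Ici.2 hu0.le)
      (show (0:ℝ) ≤ 1 - 1/u by
        have : 1/u ≤ 1 := by rw [div_le_one hu0]; linarith
        linarith)
      (show (0:ℝ) ≤ 1/u by positivity)
      (by ring)
    simp only [smul_eq_mul, mul_zero, zero_add] at key
    rw [h0] at key
    have : Ψ (1/u * u) = Ψ 1 := by rw [one_div_mul_cancel hu0.ne']
    rw [this] at key
    -- key : Ψ 1 ≤ (1 - 1/u) * 0 + 1/u * Ψ u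
    have : c ≤ Ψ u / u := by
      rw [div_eq_mul_inv, mul_comm]; rw [← one_div]; linarith
    calc c * u ≤ (Ψ u / u) * u := by
          apply mul_le_mul_of_nonneg_right this hu0.le
      _ = Ψ u := by field_simp
  set A := Real.log (1 + K) / Real.log 2 with hA_def
  have hlog2 : 0 < Real.log 2 := Real.log_pos (by norm_num)
  have hA0 : 0 ≤ A := by
    apply div_nonneg _ hlog2.le
    apply Real.log_nonneg; linarith
  set K0 := max (A + 3 * p + 1) (max (K + 1) (max 1 (1 / c ^ 2))) with hK0_def
  have hK0pos : 0 < K0 := lt_of_lt_of_le one_pos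
    (le_trans (le_max_left _ _) (le_trans (le_max_right _ _) (le_max_right _ _)))
  refine ⟨K0, hK0pos, fun s u hs hu => ?_⟩
  have hK0C : A + 3 * p + 1 ≤ K0 := le_max_left _ _
  have hK0K : K + 1 ≤ K0 := le_trans (le_max_left _ _) (le_max_right _ _)
  have hK01 : (1:ℝ) ≤ K0 := le_trans (le_trans (le_max_left _ _) (le_max_right _ _)) (le_max_right _ _)
  have hK0c : 1 / c ^ 2 ≤ K0 := le_trans (le_trans (le_max_right _ _) (le_max_right _ _)) (le_max_right _ _)
  have hs1 : 1 ≤ s := le_trans hK01 hs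
  have hu1 : 1 ≤ u := le_trans hK01 hu
  have hsu : K < s * u := by nlinarith [le_trans hK0K hs]
  have hΨsu : 0 ≤ Ψ (s * u) := hΨ0 _ (by nlinarith)
  have hΨu : 0 ≤ Ψ u := hΨ0 _ (by linarith)
  -- step 1
  have step1 : orliczExp Ψ (s * u) ≤ Real.log (1 + K * (s * u) ^ p) := by
    apply Real.log_le_log (by linarith)
    linarith [hbound (s * u) hsu]
  -- step 2
  have hB : (1:ℝ) ≤ (1 + s) * (1 + u) := by nlinarith
  have hBp1 : (1:ℝ) ≤ ((1 + s) * (1 + u)) ^ p := Real.one_le_rpow hB hp.le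
  have hsup : (s * u) ^ p ≤ ((1 + s) * (1 + u)) ^ p := by
    apply Real.rpow_le_rpow (by positivity) (by nlinarith) hp.le
  have step2 : 1 + K * (s * u) ^ p ≤ (1 + K) * ((1 + s) * (1 + u)) ^ p := by
    nlinarith
  -- step 3
  have hBppos : (0:ℝ) < ((1 + s) * (1 + u)) ^ p := by positivity
  have step3 : Real.log ((1 + K) * ((1 + s) * (1 + u)) ^ p)
      = Real.log (1 + K) + p * Real.log (1 + s) + p * Real.log (1 + u) := by
    rw [Real.log_mul (by linarith) hBppos.ne',
      Real.log_rpow (by nlinarith), Real.log_mul (by linarith) (by linarith)]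
    ring
  -- step 4 : log (1+u) ≤ 2 * orliczExp Ψ u
  have hcu : c * u ≤ Ψ u := hlin u hu1
  have hucsq : 1 / c ^ 2 ≤ u := le_trans hK0c hu
  have step4 : Real.log (1 + u) ≤ 2 * orliczExp Ψ u := by
    have h1 : Real.log (1 + u) ≤ 2 * Real.log (1 + c * u) := by
      rw [show (2:ℝ) * Real.log (1 + c * u) = Real.log ((1 + c * u) ^ 2) by
        rw [Real.log_pow]; push_cast; ring]
      apply Real.log_le_log (by linarith)
      have h1 : 1 ≤ u * c ^ 2 := (div_le_iff₀ (by positivity)).mp hucsq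
      have h2 : u ≤ c ^ 2 * u ^ 2 := by nlinarith
      have h3 : 0 ≤ c * u := mul_nonneg hc.le (by linarith)
      nlinarith
    have h2 : Real.log (1 + c * u) ≤ orliczExp Ψ u := by
      apply Real.log_le_log (by nlinarith) (by linarith)
    linarith
  have hψu0 : 0 ≤ orliczExp Ψ u := Real.log_nonneg (by linarith)
  -- step 5 : log (1+K) ≤ A * (s * log (1+s))
  have hls : Real.log 2 ≤ Real.log (1 + s) := Real.log_le_log (by norm_num) (by linarith)
  have hls0 : 0 ≤ Real.log (1 + s) := le_trans hlog2.le hls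
  have hslogs : Real.log 2 ≤ s * Real.log (1 + s) := by nlinarith
  have step5 : Real.log (1 + K) ≤ A * (s * Real.log (1 + s)) := by
    have : A * Real.log 2 = Real.log (1 + K) := div_mul_cancel₀ _ hlog2.ne'
    nlinarith
  -- combine
  calc orliczExp Ψ (s * u)
      ≤ Real.log (1 + K * (s * u) ^ p) := step1
    _ ≤ Real.log ((1 + K) * ((1 + s) * (1 + u)) ^ p) :=
        Real.log_le_log (by positivity) step2
    _ = Real.log (1 + K) + p * Real.log (1 + s) + p * Real.log (1 + u) := step3
    _ ≤ A * (s * Real.log (1 + s)) + p * (s * Real.log (1 + s))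
        + 2 * p * (s * orliczExp Ψ u) := by
        have e1 : Real.log (1 + s) ≤ s * Real.log (1 + s) :=
          le_mul_of_one_le_left hls0 hs1
        have h1 : p * Real.log (1 + s) ≤ p * (s * Real.log (1 + s)) :=
          mul_le_mul_of_nonneg_left e1 hp.le
        have e2 : orliczExp Ψ u ≤ s * orliczExp Ψ u :=
          le_mul_of_one_le_left hψu0 hs1
        have h2 : p * Real.log (1 + u) ≤ 2 * p * (s * orliczExp Ψ u) := by
          have := mul_le_mul_of_nonneg_left step4 hp.le
          have := mul_le_mul_of_nonneg_left e2 (by positivity : (0:ℝ) ≤ 2 * p)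
          nlinarith
        linarith [step5]
    _ ≤ K0 * (s * Real.log (1 + s) + s * orliczExp Ψ u) := by
        have hX : 0 ≤ s * Real.log (1 + s) := mul_nonneg (by linarith) hls0
        have hY : 0 ≤ s * orliczExp Ψ u := mul_nonneg (by linarith) hψu0
        have q1 : (A + p) * (s * Real.log (1 + s)) ≤ K0 * (s * Real.log (1 + s)) :=
          mul_le_mul_of_nonneg_right (by linarith) hX
        have q2 : (2 * p) * (s * orliczExp Ψ u) ≤ K0 * (s * orliczExp Ψ u) :=
          mul_le_mul_of_nonneg_right (by linarith) hY
        nlinarith
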